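/- For every n ≥ 1, all integers m_1, …, m_n ≥ 2, and every ε > 0, there exist finite type sets T_1, …, T_n with |T_i| = m_i, independent uniform type distributions f_i on T_i, a finite outcome set O, valuations v_1, …, v_n, and an n-agent mechanism M that is ε-BIC (and also ε-EEIC) and interim IR, such that every BIC and interim IR mechanism M' on the same data with W(M') ≥ W(M) satisfies R(M') ≤ R(M) − ∑_{i=1}^n (m_i − 1)·ε/2. In particular, any welfare-preserving transformation must suffer revenue loss Ω((∑_i |T_i|)·ε). -/

import Mathlib

open Finset

namespace Stmt8

/-- Interim utility of agent `i` with true type `s` reporting `s'`, for independent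
uniform type distributions on the type sets `Fin (m j)`. -/
noncomputable def iU {n : ℕ} (m : Fin n → ℕ) {k : ℕ}
    (v : (i : Fin n) → Fin (m i) → Fin k → ℝ)
    (x : (∀ i, Fin (m i)) → Fin k → ℝ) (p : Fin n → (∀ i, Fin (m i)) → ℝ)
    (i : Fin n) (s s' : Fin (m i)) : ℝ :=
  (∑ o, (∑ t : ∀ j, Fin (m j), (∏ j, (1 : ℝ) / (m j)) * x (Function.update t i s') o)
      * v i s o)
    - ∑ t : ∀ j, Fin (m j), (∏ j, (1 : ℝ) / (m j)) * p i (Function.update t i s')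

/-- Ex-post utility of agent `i` with true type `s` at report profile `th`. -/
noncomputable def epU {n : ℕ} (m : Fin n → ℕ) {k : ℕ}
    (v : (i : Fin n) → Fin (m i) → Fin k → ℝ)
    (x : (∀ i, Fin (m i)) → Fin k → ℝ) (p : Fin n → (∀ i, Fin (m i)) → ℝ)
    (i : Fin n) (s : Fin (m i)) (th : ∀ j, Fin (m j)) : ℝ :=
  (∑ o, x th o * v i s o) - p i th

/-- Expected revenue under independent uniform distributions. -/
noncomputable def Rev {n : ℕ} (m : Fin n → ℕ)
    (p : Fin n → (∀ i, Fin (m i)) → ℝ) : ℝ :=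
  ∑ t : ∀ j, Fin (m j), (∏ j, (1 : ℝ) / (m j)) * ∑ i, p i t

/-- Expected social welfare under independent uniform distributions. -/
noncomputable def Wel {n : ℕ} (m : Fin n → ℕ) {k : ℕ}
    (v : (i : Fin n) → Fin (m i) → Fin k → ℝ)
    (x : (∀ i, Fin (m i)) → Fin k → ℝ) : ℝ :=
  ∑ t : ∀ j, Fin (m j), (∏ j, (1 : ℝ) / (m j)) * ∑ i, ∑ o, x t o * v i (t i) o

end Stmt8

open Stmt8

namespace LBRL
variable {n : ℕ} (m : Fin n → ℕ)

/-! ### basic sum infrastructure -/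

lemma update_split (i : Fin n) (a s : Fin (m i)) (r : ∀ j : {j // j ≠ i}, Fin (m j)) :
    Function.update ((Equiv.piSplitAt i (fun j => Fin (m j))).symm (a, r)) i s
      = (Equiv.piSplitAt i (fun j => Fin (m j))).symm (s, r) := by
  funext j
  rcases eq_or_ne j i with rfl | h
  · simp [Equiv.piSplitAt]
  · simp [Function.update, h, Equiv.piSplitAt]

lemma sum_weight (hm : ∀ j, 0 < m j) :
    ∑ _t : ∀ j, Fin (m j), ∏ j, (1 : ℝ) / (m j) = 1 := by
  rw [Finset.sum_const, card_univ, Fintype.card_pi]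
  simp only [Fintype.card_fin, nsmul_eq_mul, Nat.cast_prod, ← Finset.prod_mul_distrib]
  exact Finset.prod_eq_one fun j _ => by
    rw [mul_one_div, div_self (by exact_mod_cast (hm j).ne' : (m j : ℝ) ≠ 0)]

lemma sum_wconst (hm : ∀ j, 0 < m j) (c : ℝ) :
    ∑ _t : ∀ j, Fin (m j), (∏ j, (1 : ℝ) / (m j)) * c = c := by
  rw [← Finset.sum_mul, sum_weight m hm, one_mul]

lemma interim_sum (i : Fin n) (g : (∀ j, Fin (m j)) → ℝ) :
    ∑ s : Fin (m i), ∑ t : ∀ j, Fin (m j), g (Function.update t i s)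
      = (m i) * ∑ t : ∀ j, Fin (m j), g t := by
  have base : ∀ (h : (∀ j, Fin (m j)) → ℝ),
      ∑ t : ∀ j, Fin (m j), h t
        = ∑ q : Fin (m i) × ∀ j : {j // j ≠ i}, Fin (m j),
            h ((Equiv.piSplitAt i (fun j => Fin (m j))).symm q) :=
    fun h => (Equiv.sum_comp (Equiv.piSplitAt i (fun j => Fin (m j))).symm h).symm
  have inner : ∀ s : Fin (m i),
      ∑ t : ∀ j, Fin (m j), g (Function.update t i s)
        = (m i) * ∑ r : ∀ j : {j // j ≠ i}, Fin (m j),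
            g ((Equiv.piSplitAt i (fun j => Fin (m j))).symm (s, r)) := by
    intro s
    rw [base (fun t => g (Function.update t i s))]
    rw [Fintype.sum_prod_type]
    simp only [update_split]
    rw [Finset.sum_const, card_univ, Fintype.card_fin, nsmul_eq_mul]
  rw [base g, Fintype.sum_prod_type]
  simp only [inner]
  rw [← Finset.mul_sum]

lemma coord_avg (hm : ∀ j, 0 < m j) (i : Fin n) (φ : Fin (m i) → ℝ) :
    ∑ t : ∀ j, Fin (m j), (∏ j, (1 : ℝ) / (m j)) * φ (t i)
      = (∑ s, φ s) / (m i) := by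
  have h := interim_sum m i (fun t => (∏ j, (1 : ℝ) / (m j)) * φ (t i))
  simp only [Function.update_self] at h
  have h2 : ∀ s : Fin (m i),
      ∑ _t : ∀ j, Fin (m j), (∏ j, (1 : ℝ) / (m j)) * φ s = φ s :=
    fun s => sum_wconst m hm (φ s)
  rw [Finset.sum_congr rfl (fun s _ => h2 s)] at h
  have hmi : (0:ℝ) < (m i : ℝ) := by exact_mod_cast hm i
  rw [h, mul_comm ((m i : ℝ)) _, mul_div_assoc, div_self hmi.ne', mul_one]

/-! ### the construction -/

noncomputable def EE [∀ j, NeZero (m j)] : (∀ j, Fin (m j)) ≃ Fin (∏ j, m j) :=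
  Fintype.equivFinOfCardEq (by simp)

noncomputable def vval (ε : ℝ) (i : Fin n) (s oi : Fin (m i)) : ℝ :=
  if oi = s then (2 * (s : ℕ) + 2 : ℝ) * ε
  else if (oi : ℕ) + 1 = (s : ℕ) then (2 * (s : ℕ) + 1 : ℝ) * ε else 0

lemma vval_self (ε : ℝ) (i : Fin n) (s : Fin (m i)) :
    vval m ε i s s = (2 * (s : ℕ) + 2 : ℝ) * ε := by simp [vval]

lemma vval_nonneg {ε : ℝ} (hε : 0 ≤ ε) (i : Fin n) (s oi : Fin (m i)) :
    0 ≤ vval m ε i s oi := by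
  unfold vval; split_ifs <;> positivity

lemma vval_le {ε : ℝ} (hε : 0 ≤ ε) (i : Fin n) {s oi : Fin (m i)} (h : oi ≠ s) :
    vval m ε i s oi ≤ (2 * (s : ℕ) + 1 : ℝ) * ε := by
  unfold vval
  rw [if_neg h]
  split_ifs
  · exact le_rfl
  · positivity

lemma vval_le_self {ε : ℝ} (hε : 0 ≤ ε) (i : Fin n) (s oi : Fin (m i)) :
    vval m ε i s oi ≤ vval m ε i s s := by
  rcases eq_or_ne oi s with rfl | h
  · exact le_rfl
  · rw [vval_self]
    have := vval_le m hε i h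
    linarith

lemma vval_gap {ε : ℝ} (hε : 0 ≤ ε) (i : Fin n) (s s' : Fin (m i)) :
    vval m ε i s s' - (2 * (s' : ℕ) + 2 : ℝ) * ε ≤ ε := by
  unfold vval
  split_ifs with h1 h2
  · rw [h1]; linarith
  · have : ((s : ℕ) : ℝ) = ((s' : ℕ) : ℝ) + 1 := by exact_mod_cast h2.symm
    rw [this]; nlinarith
  · nlinarith [mul_nonneg (by positivity : (0:ℝ) ≤ 2 * ((s' : ℕ) : ℝ) + 2) hε]

lemma vval_step (ε : ℝ) (i : Fin n) {s s' : Fin (m i)}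
    (h1 : (s' : ℕ) + 1 = (s : ℕ)) :
    vval m ε i s s' = (2 * (s : ℕ) + 1 : ℝ) * ε := by
  have hne : s' ≠ s := by
    intro h; rw [h] at h1; omega
  rw [vval, if_neg hne, if_pos h1]

/-! ### interim formulas -/

lemma sum_pick {K : ℕ} (c : Fin K) (f : Fin K → ℝ) :
    ∑ o, (if o = c then (1:ℝ) else 0) * f o = f c := by
  simp only [ite_mul, one_mul, zero_mul]
  rw [Finset.sum_ite_eq' univ c f]
  simp

lemma alloc_term [∀ j, NeZero (m j)] (hm : ∀ j, 0 < m j) (ε : ℝ)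
    (i : Fin n) (s s' : Fin (m i)) :
    ∑ o, (∑ t : ∀ j, Fin (m j), (∏ j, (1 : ℝ) / (m j)) *
        (if o = EE m (Function.update t i s') then (1:ℝ) else 0))
      * vval m ε i s ((EE m).symm o i) = vval m ε i s s' := by
  have swap : ∑ o, (∑ t : ∀ j, Fin (m j), (∏ j, (1 : ℝ) / (m j)) *
        (if o = EE m (Function.update t i s') then (1:ℝ) else 0))
      * vval m ε i s ((EE m).symm o i)
      = ∑ t : ∀ j, Fin (m j), ∑ o, ((∏ j, (1 : ℝ) / (m j)) *
        (if o = EE m (Function.update t i s') then (1:ℝ) else 0))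
      * vval m ε i s ((EE m).symm o i) := by
    rw [Finset.sum_comm]
    exact Finset.sum_congr rfl fun t _ => by rw [← Finset.sum_mul]
  rw [swap]
  have inner : ∀ t : ∀ j, Fin (m j),
      ∑ o, ((∏ j, (1 : ℝ) / (m j)) *
        (if o = EE m (Function.update t i s') then (1:ℝ) else 0))
      * vval m ε i s ((EE m).symm o i)
      = (∏ j, (1 : ℝ) / (m j)) * vval m ε i s s' := by
    intro t
    have : ∀ o, ((∏ j, (1 : ℝ) / (m j)) *
        (if o = EE m (Function.update t i s') then (1:ℝ) else 0))
      * vval m ε i s ((EE m).symm o i)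
        = (if o = EE m (Function.update t i s') then (1:ℝ) else 0) *
            ((∏ j, (1 : ℝ) / (m j)) * vval m ε i s ((EE m).symm o i)) := by
      intro o; ring
    rw [Finset.sum_congr rfl fun o _ => this o,
      sum_pick (EE m (Function.update t i s'))
        (fun o => (∏ j, (1 : ℝ) / (m j)) * vval m ε i s ((EE m).symm o i))]
    simp [Equiv.symm_apply_apply]
  rw [Finset.sum_congr rfl fun t _ => inner t, sum_wconst m hm]


lemma iU_formula [∀ j, NeZero (m j)] (hm : ∀ j, 0 < m j) (ε : ℝ)
    (q : Fin n → (∀ j, Fin (m j)) → ℝ) (i : Fin n) (s s' : Fin (m i)) :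
    iU m (fun i s o => vval m ε i s ((EE m).symm o i))
        (fun t o => if o = EE m t then (1:ℝ) else 0) q i s s'
      = vval m ε i s s'
        - ∑ t : ∀ j, Fin (m j), (∏ j, (1 : ℝ) / (m j)) * q i (Function.update t i s') := by
  unfold iU
  rw [alloc_term m hm ε i s s']

lemma epU_formula [∀ j, NeZero (m j)] (ε : ℝ)
    (q : Fin n → (∀ j, Fin (m j)) → ℝ) (i : Fin n) (s : Fin (m i))
    (th : ∀ j, Fin (m j)) :
    epU m (fun i s o => vval m ε i s ((EE m).symm o i))
        (fun t o => if o = EE m t then (1:ℝ) else 0) q i s th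
      = vval m ε i s (th i) - q i th := by
  unfold epU
  rw [sum_pick (EE m th) (fun o => vval m ε i s ((EE m).symm o i))]
  simp [Equiv.symm_apply_apply]

lemma gauss (M : ℕ) (hM : 1 ≤ M) :
    ∑ s : Fin M, ((s : ℕ) : ℝ) = (M : ℝ) * ((M : ℝ) - 1) / 2 := by
  have h1 : (∑ s : Fin M, (s : ℕ)) * 2 = M * (M - 1) := by
    rw [Fin.sum_univ_eq_sum_range (fun i => i) M]
    exact Finset.sum_range_id_mul_two M
  have h2 := congrArg (Nat.cast : ℕ → ℝ) h1
  push_cast [Nat.cast_sub hM] at h2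
  linarith

end LBRL


/-- Lower bound on revenue loss for multiple agents: for every `n ≥ 1`,
type-set sizes `m i ≥ 2` and `ε > 0`, there is an instance with independent uniform
type distributions and an `ε`-BIC, `ε`-EEIC and interim IR mechanism such that every
welfare-preserving BIC and interim IR mechanism loses at least `∑ i (m i − 1)·ε/2`
revenue. -/
theorem lower_bound_revenue_loss_multi_agent
    (n : ℕ) (hn : 1 ≤ n) (m : Fin n → ℕ) (hm : ∀ i, 2 ≤ m i)
    (ε : ℝ) (hε : 0 < ε) :
    ∃ (k : ℕ) (v : (i : Fin n) → Fin (m i) → Fin k → ℝ)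
      (x : (∀ i, Fin (m i)) → Fin k → ℝ) (p : Fin n → (∀ i, Fin (m i)) → ℝ),
      (∀ i t o, 0 ≤ v i t o) ∧
      (∀ t o, 0 ≤ x t o) ∧ (∀ t, ∑ o, x t o = 1) ∧ (∀ i t, 0 ≤ p i t) ∧
      -- M is ε-BIC
      (∀ (i : Fin n) (s s' : Fin (m i)), iU m v x p i s s ≥ iU m v x p i s s' - ε) ∧
      -- M is ε-EEIC
      (∀ i : Fin n,
        ∑ t : ∀ j, Fin (m j), (∏ j, (1 : ℝ) / (m j)) *
          ((Finset.univ.sup'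
              (Finset.univ_nonempty_iff.mpr ⟨⟨0, by have := hm i; omega⟩⟩)
              fun s' : Fin (m i) => epU m v x p i (t i) (Function.update t i s'))
            - epU m v x p i (t i) t) ≤ ε) ∧
      -- M is interim IR
      (∀ (i : Fin n) (s : Fin (m i)), 0 ≤ iU m v x p i s s) ∧
      -- every welfare-preserving BIC and interim IR mechanism loses revenue
      (∀ (x' : (∀ i, Fin (m i)) → Fin k → ℝ) (p' : Fin n → (∀ i, Fin (m i)) → ℝ),
        (∀ t o, 0 ≤ x' t o) → (∀ t, ∑ o, x' t o = 1) → (∀ i t, 0 ≤ p' i t) →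
        (∀ (i : Fin n) (s s' : Fin (m i)), iU m v x' p' i s s ≥ iU m v x' p' i s s') →
        (∀ (i : Fin n) (s : Fin (m i)), 0 ≤ iU m v x' p' i s s) →
        Wel m v x' ≥ Wel m v x →
        Rev m p' ≤ Rev m p - ∑ i, ((m i : ℝ) - 1) * ε / 2) := by
  classical
  haveI : ∀ j, NeZero (m j) := fun j => ⟨by have := hm j; omega⟩
  have hm' : ∀ j, 0 < m j := fun j => by have := hm j; omega
  have hwpos : (0:ℝ) < ∏ j, (1 : ℝ) / (m j) := by
    apply Finset.prod_pos
    intro j _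
    have : (0:ℝ) < (m j : ℝ) := by exact_mod_cast hm' j
    positivity
  refine ⟨∏ j, m j,
    fun i s o => LBRL.vval m ε i s ((LBRL.EE m).symm o i),
    fun t o => if o = LBRL.EE m t then (1:ℝ) else 0,
    fun i t => (2 * ((t i : ℕ)) + 2 : ℝ) * ε,
    ?_, ?_, ?_, ?_, ?_, ?_, ?_, ?_⟩
  · intro i t o
    exact LBRL.vval_nonneg m hε.le i t _
  · intro t o
    dsimp only
    split <;> norm_num
  · intro t
    rw [Finset.sum_ite_eq' univ (LBRL.EE m t) (fun _ => (1:ℝ))]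
    simp
  · intro i t
    positivity
  · -- ε-BIC
    intro i s s'
    have hpay : ∀ (s'' : Fin (m i)),
        (∑ t : ∀ j, Fin (m j), (∏ j, (1 : ℝ) / (m j)) *
          ((fun i t => (2 * ((t i : ℕ)) + 2 : ℝ) * ε) i (Function.update t i s'')))
          = (2 * (s'' : ℕ) + 2 : ℝ) * ε := by
      intro s''
      simp only [Function.update_self]
      exact LBRL.sum_wconst m hm' _
    rw [LBRL.iU_formula m hm' ε _ i s s, LBRL.iU_formula m hm' ε _ i s s',
      hpay s, hpay s', LBRL.vval_self]
    have := LBRL.vval_gap m hε.le i s s'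
    linarith
  · -- ε-EEIC
    intro i
    have hth : ∀ (t : ∀ j, Fin (m j)) (s' : Fin (m i)),
        epU m (fun i s o => LBRL.vval m ε i s ((LBRL.EE m).symm o i))
          (fun t o => if o = LBRL.EE m t then (1:ℝ) else 0)
          (fun i t => (2 * ((t i : ℕ)) + 2 : ℝ) * ε) i (t i) (Function.update t i s')
          = LBRL.vval m ε i (t i) s' - (2 * (s' : ℕ) + 2 : ℝ) * ε := by
      intro t s'
      rw [LBRL.epU_formula]
      simp only [Function.update_self]
    have htruth : ∀ (t : ∀ j, Fin (m j)),
        epU m (fun i s o => LBRL.vval m ε i s ((LBRL.EE m).symm o i))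
          (fun t o => if o = LBRL.EE m t then (1:ℝ) else 0)
          (fun i t => (2 * ((t i : ℕ)) + 2 : ℝ) * ε) i (t i) t = 0 := by
      intro t
      rw [LBRL.epU_formula, LBRL.vval_self]
      ring
    have hsup : ∀ t : ∀ j, Fin (m j),
        ((Finset.univ.sup'
            (Finset.univ_nonempty_iff.mpr ⟨⟨0, by have := hm i; omega⟩⟩)
            fun s' : Fin (m i) =>
              epU m (fun i s o => LBRL.vval m ε i s ((LBRL.EE m).symm o i))
                (fun t o => if o = LBRL.EE m t then (1:ℝ) else 0)
                (fun i t => (2 * ((t i : ℕ)) + 2 : ℝ) * ε) i (t i)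
                (Function.update t i s'))
          - epU m (fun i s o => LBRL.vval m ε i s ((LBRL.EE m).symm o i))
              (fun t o => if o = LBRL.EE m t then (1:ℝ) else 0)
              (fun i t => (2 * ((t i : ℕ)) + 2 : ℝ) * ε) i (t i) t) ≤ ε := by
      intro t
      rw [htruth t, sub_zero]
      apply Finset.sup'_le
      intro s' _
      rw [hth t s']
      exact LBRL.vval_gap m hε.le i (t i) s'
    calc ∑ t : ∀ j, Fin (m j), (∏ j, (1 : ℝ) / (m j)) * _
        ≤ ∑ _t : ∀ j, Fin (m j), (∏ j, (1 : ℝ) / (m j)) * ε :=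
          Finset.sum_le_sum fun t _ =>
            mul_le_mul_of_nonneg_left (hsup t) hwpos.le
      _ = ε := LBRL.sum_wconst m hm' ε
  · -- interim IR
    intro i s
    have hpay :
        (∑ t : ∀ j, Fin (m j), (∏ j, (1 : ℝ) / (m j)) *
          ((fun i t => (2 * ((t i : ℕ)) + 2 : ℝ) * ε) i (Function.update t i s)))
          = (2 * (s : ℕ) + 2 : ℝ) * ε := by
      simp only [Function.update_self]
      exact LBRL.sum_wconst m hm' _
    rw [LBRL.iU_formula m hm' ε _ i s s, hpay, LBRL.vval_self]
    simp
  · -- main part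
    intro x' p' hx'0 hx'1 hp'0 hBIC' hIR' hW
    set S : (∀ j, Fin (m j)) → Fin (∏ j, m j) → ℝ :=
      fun t o => ∑ i, LBRL.vval m ε i (t i) ((LBRL.EE m).symm o i) with hSdef
    -- rewrite welfare
    have welrw : ∀ (y : (∀ j, Fin (m j)) → Fin (∏ j, m j) → ℝ),
        Wel m (fun i s o => LBRL.vval m ε i s ((LBRL.EE m).symm o i)) y
          = ∑ t : ∀ j, Fin (m j), (∏ j, (1 : ℝ) / (m j)) * ∑ o, y t o * S t o := by
      intro y
      unfold Wel
      refine Finset.sum_congr rfl fun t _ => ?_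
      congr 1
      rw [Finset.sum_comm]
      exact Finset.sum_congr rfl fun o _ => (Finset.mul_sum _ _ _).symm
    have hSstar : ∀ t : ∀ j, Fin (m j),
        ∑ o, (if o = LBRL.EE m t then (1:ℝ) else 0) * S t o = S t (LBRL.EE m t) :=
      fun t => LBRL.sum_pick (LBRL.EE m t) (S t)
    have hstar_val : ∀ t : ∀ j, Fin (m j),
        S t (LBRL.EE m t) = ∑ i, LBRL.vval m ε i (t i) (t i) := by
      intro t
      simp [hSdef, Equiv.symm_apply_apply]
    have hSle : ∀ (t : ∀ j, Fin (m j)) (o : Fin (∏ j, m j)), o ≠ LBRL.EE m t →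
        S t o + ε ≤ S t (LBRL.EE m t) := by
      intro t o ho
      have hu : (LBRL.EE m).symm o ≠ t := by
        intro h
        exact ho (by rw [← h]; exact ((LBRL.EE m).apply_symm_apply o).symm)
      obtain ⟨i0, hi0⟩ := Function.ne_iff.mp hu
      have hterm : ∀ i, 0 ≤ LBRL.vval m ε i (t i) (t i)
          - LBRL.vval m ε i (t i) ((LBRL.EE m).symm o i) := fun i => by
        have := LBRL.vval_le_self m hε.le i (t i) ((LBRL.EE m).symm o i)
        linarith
      have hkey : ε ≤ ∑ i, (LBRL.vval m ε i (t i) (t i)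
          - LBRL.vval m ε i (t i) ((LBRL.EE m).symm o i)) := by
        refine le_trans ?_ (Finset.single_le_sum (fun i _ => hterm i) (mem_univ i0))
        have h1 := LBRL.vval_le m hε.le i0 hi0
        rw [LBRL.vval_self]
        linarith
      rw [Finset.sum_sub_distrib] at hkey
      rw [hstar_val t]
      simp only [hSdef]
      linarith
    -- claim B
    have claimB : ∀ t : ∀ j, Fin (m j),
        ∑ o, x' t o * S t o
          ≤ S t (LBRL.EE m t) - ε * (1 - x' t (LBRL.EE m t)) := by
      intro t
      have hsplit : ∑ o, x' t o * S t o
          = x' t (LBRL.EE m t) * S t (LBRL.EE m t)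
            + ∑ o ∈ univ.erase (LBRL.EE m t), x' t o * S t o :=
        (Finset.add_sum_erase univ (fun o => x' t o * S t o) (mem_univ _)).symm
      have herase_le : ∑ o ∈ univ.erase (LBRL.EE m t), x' t o * S t o
          ≤ ∑ o ∈ univ.erase (LBRL.EE m t), x' t o * (S t (LBRL.EE m t) - ε) :=
        Finset.sum_le_sum fun o ho =>
          mul_le_mul_of_nonneg_left
            (by have := hSle t o (Finset.ne_of_mem_erase ho); linarith)
            (hx'0 t o)
      have hsum_erase : ∑ o ∈ univ.erase (LBRL.EE m t), x' t o
          = 1 - x' t (LBRL.EE m t) := by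
        have h := Finset.add_sum_erase univ (x' t) (mem_univ (LBRL.EE m t))
        rw [hx'1 t] at h
        linarith
      calc ∑ o, x' t o * S t o
          = x' t (LBRL.EE m t) * S t (LBRL.EE m t)
            + ∑ o ∈ univ.erase (LBRL.EE m t), x' t o * S t o := hsplit
        _ ≤ x' t (LBRL.EE m t) * S t (LBRL.EE m t)
            + (1 - x' t (LBRL.EE m t)) * (S t (LBRL.EE m t) - ε) := by
            rw [← hsum_erase, ← Finset.sum_mul] at *
            linarith [herase_le]
        _ = S t (LBRL.EE m t) - ε * (1 - x' t (LBRL.EE m t)) := by ring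
    -- aggregate
    have haggr : Wel m (fun i s o => LBRL.vval m ε i s ((LBRL.EE m).symm o i)) x'
        ≤ Wel m (fun i s o => LBRL.vval m ε i s ((LBRL.EE m).symm o i))
            (fun t o => if o = LBRL.EE m t then (1:ℝ) else 0)
          - ε * ∑ t : ∀ j, Fin (m j), (∏ j, (1 : ℝ) / (m j))
              * (1 - x' t (LBRL.EE m t)) := by
      rw [welrw x', welrw (fun t o => if o = LBRL.EE m t then (1:ℝ) else 0)]
      have hx : ∀ t : ∀ j, Fin (m j),
          ∑ o, (if o = LBRL.EE m t then (1:ℝ) else 0) * S t o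
            = S t (LBRL.EE m t) := hSstar
      rw [Finset.mul_sum, ← Finset.sum_sub_distrib]
      refine Finset.sum_le_sum fun t _ => ?_
      rw [hx t]
      have h1 := claimB t
      have h2 := mul_le_mul_of_nonneg_left h1 hwpos.le
      nlinarith [h2]
    have hKle : ∑ t : ∀ j, Fin (m j), (∏ j, (1 : ℝ) / (m j))
        * (1 - x' t (LBRL.EE m t)) ≤ 0 := by
      by_contra h
      push_neg at h
      nlinarith [haggr, hW]
    have hterm_nonneg : ∀ t : ∀ j, Fin (m j),
        0 ≤ (∏ j, (1 : ℝ) / (m j)) * (1 - x' t (LBRL.EE m t)) := by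
      intro t
      have hle1 : x' t (LBRL.EE m t) ≤ 1 := by
        rw [← hx'1 t]
        exact Finset.single_le_sum (fun o _ => hx'0 t o) (mem_univ _)
      have : 0 ≤ 1 - x' t (LBRL.EE m t) := by linarith
      positivity
    have hzero := (Finset.sum_eq_zero_iff_of_nonneg
      (fun t _ => hterm_nonneg t)).mp
      (le_antisymm hKle (Finset.sum_nonneg fun t _ => hterm_nonneg t))
    have hx'Et : ∀ t : ∀ j, Fin (m j), x' t (LBRL.EE m t) = 1 := by
      intro t
      have h := hzero t (mem_univ t)
      rcases mul_eq_zero.mp h with h' | h'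
      · exact absurd h' hwpos.ne'
      · linarith
    have hx'off : ∀ (t : ∀ j, Fin (m j)) (o : Fin (∏ j, m j)),
        o ≠ LBRL.EE m t → x' t o = 0 := by
      intro t o ho
      have h := Finset.add_sum_erase univ (x' t) (mem_univ (LBRL.EE m t))
      rw [hx'1 t, hx'Et t] at h
      have h0 : ∑ o ∈ univ.erase (LBRL.EE m t), x' t o = 0 := by linarith
      exact (Finset.sum_eq_zero_iff_of_nonneg
        (fun o _ => hx'0 t o)).mp h0 o (Finset.mem_erase.mpr ⟨ho, mem_univ o⟩)
    have hxx : x' = (fun t o => if o = LBRL.EE m t then (1:ℝ) else 0) := by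
      funext t o
      by_cases h : o = LBRL.EE m t
      · rw [h, if_pos rfl, hx'Et t]
      · rw [if_neg h, hx'off t o h]
    subst hxx
    -- payment chain
    set P : (i : Fin n) → Fin (m i) → ℝ :=
      fun i s => ∑ t : ∀ j, Fin (m j), (∏ j, (1 : ℝ) / (m j))
        * p' i (Function.update t i s) with hPdef
    have hiU' : ∀ (i : Fin n) (s s' : Fin (m i)),
        iU m (fun i s o => LBRL.vval m ε i s ((LBRL.EE m).symm o i))
          (fun t o => if o = LBRL.EE m t then (1:ℝ) else 0) p' i s s'
          = LBRL.vval m ε i s s' - P i s' := fun i s s' =>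
      LBRL.iU_formula m hm' ε p' i s s'
    have hchain : ∀ (i : Fin n) (j : ℕ) (hj : j < m i),
        P i ⟨j, hj⟩ ≤ ((j : ℝ) + 2) * ε := by
      intro i j
      induction j with
      | zero =>
        intro hj
        have h := hIR' i ⟨0, hj⟩
        rw [hiU' i ⟨0, hj⟩ ⟨0, hj⟩, LBRL.vval_self] at h
        simp only [Fin.val_mk, Nat.cast_zero] at h ⊢
        linarith
      | succ j ih =>
        intro hj
        have hj' : j < m i := by omega
        have hb := hBIC' i ⟨j + 1, hj⟩ ⟨j, hj'⟩
        rw [hiU' i ⟨j + 1, hj⟩ ⟨j + 1, hj⟩, hiU' i ⟨j + 1, hj⟩ ⟨j, hj'⟩,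
          LBRL.vval_self,
          LBRL.vval_step m ε i
            (show ((⟨j, hj'⟩ : Fin (m i)) : ℕ) + 1 = ((⟨j + 1, hj⟩ : Fin (m i)) : ℕ)
              from rfl)] at hb
        have hih := ih hj'
        simp only [Fin.val_mk] at hb ⊢
        push_cast at hb ⊢
        linarith
    have hchain' : ∀ (i : Fin n) (s : Fin (m i)),
        P i s ≤ (((s : ℕ) : ℝ) + 2) * ε := by
      intro i s
      have := hchain i s.val s.isLt
      simpa using this
    -- revenue computations
    have hrev_swap : ∀ (q : Fin n → (∀ j, Fin (m j)) → ℝ),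
        Rev m q = ∑ i, ∑ t : ∀ j, Fin (m j), (∏ j, (1 : ℝ) / (m j)) * q i t := by
      intro q
      unfold Rev
      simp only [Finset.mul_sum]
      exact Finset.sum_comm
    have hPint : ∀ i : Fin n,
        ∑ t : ∀ j, Fin (m j), (∏ j, (1 : ℝ) / (m j)) * p' i t
          = (∑ s, P i s) / (m i) := by
      intro i
      have hmi : (0:ℝ) < (m i : ℝ) := by exact_mod_cast hm' i
      have h := LBRL.interim_sum m i
        (fun t => (∏ j, (1 : ℝ) / (m j)) * p' i t)
      have h2 : ∑ s, P i s
          = (m i : ℝ) * ∑ t : ∀ j, Fin (m j), (∏ j, (1 : ℝ) / (m j)) * p' i t := h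
      rw [h2, mul_comm, mul_div_assoc, div_self hmi.ne', mul_one]
    have hRevp' : Rev m p' = ∑ i, (∑ s, P i s) / (m i) := by
      rw [hrev_swap p']
      exact Finset.sum_congr rfl fun i _ => hPint i
    have hRevp : Rev m (fun i t => (2 * ((t i : ℕ)) + 2 : ℝ) * ε)
        = ∑ i, (∑ s : Fin (m i), (2 * ((s : ℕ) : ℝ) + 2) * ε) / (m i) := by
      rw [hrev_swap]
      exact Finset.sum_congr rfl fun i _ =>
        LBRL.coord_avg m hm' i (fun s => (2 * ((s : ℕ) : ℝ) + 2) * ε)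
    have per_i : ∀ i : Fin n,
        (∑ s, P i s) / (m i)
          ≤ (∑ s : Fin (m i), (2 * ((s : ℕ) : ℝ) + 2) * ε) / (m i)
            - ((m i : ℝ) - 1) * ε / 2 := by
      intro i
      have hMpos : (0:ℝ) < (m i : ℝ) := by exact_mod_cast hm' i
      have hg := LBRL.gauss (m i) (by have := hm i; omega)
      have hA : ∑ s : Fin (m i), (((s : ℕ) : ℝ) + 2) * ε
          = ((m i : ℝ) * ((m i : ℝ) - 1) / 2 + 2 * (m i : ℝ)) * ε := by
        simp only [add_mul]
        rw [Finset.sum_add_distrib, ← Finset.sum_mul, hg]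
        simp only [Finset.sum_const, card_univ, Fintype.card_fin, nsmul_eq_mul]
        ring
      have hB : ∑ s : Fin (m i), (2 * ((s : ℕ) : ℝ) + 2) * ε
          = ((m i : ℝ) * ((m i : ℝ) - 1) + 2 * (m i : ℝ)) * ε := by
        simp only [add_mul]
        rw [Finset.sum_add_distrib]
        have : ∑ s : Fin (m i), 2 * ((s : ℕ) : ℝ) * ε
            = 2 * ((m i : ℝ) * ((m i : ℝ) - 1) / 2) * ε := by
          rw [← Finset.sum_mul, ← Finset.mul_sum, hg]
        rw [this]
        simp only [Finset.sum_const, card_univ, Fintype.card_fin, nsmul_eq_mul]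
        ring
      have hPs : ∑ s, P i s ≤ ∑ s : Fin (m i), (((s : ℕ) : ℝ) + 2) * ε :=
        Finset.sum_le_sum fun s _ => hchain' i s
      rw [hB]
      calc (∑ s, P i s) / (m i : ℝ)
          ≤ (((m i : ℝ) * ((m i : ℝ) - 1) / 2 + 2 * (m i : ℝ)) * ε) / (m i : ℝ) := by
            rw [← hA]
            exact (div_le_div_iff_of_pos_right hMpos).mpr hPs
        _ = (((m i : ℝ) * ((m i : ℝ) - 1) + 2 * (m i : ℝ)) * ε) / (m i : ℝ)
              - ((m i : ℝ) - 1) * ε / 2 := by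
            field_simp
            ring
    rw [hRevp', hRevp]
    calc ∑ i, (∑ s, P i s) / (m i : ℝ)
        ≤ ∑ i, ((∑ s : Fin (m i), (2 * ((s : ℕ) : ℝ) + 2) * ε) / (m i)
            - ((m i : ℝ) - 1) * ε / 2) := Finset.sum_le_sum fun i _ => per_i i
      _ = (∑ i, (∑ s : Fin (m i), (2 * ((s : ℕ) : ℝ) + 2) * ε) / (m i))
            - ∑ i, ((m i : ℝ) - 1) * ε / 2 := Finset.sum_sub_distrib _ _
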